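/- The function f̄ given by f̄(z) = βu₀/r - (1/r)(θ₂(u₀)e^{θ₁(u₀)z} + θ₁(u₀)e^{-θ₂(u₀)z})/((θ₁(u₀)+θ₂(u₀))e^{θ₁(u₀)d}) is strictly concave and strictly decreasing on (0,d]. -/

import Mathlib

open Real Set

noncomputable def th1 (μ σ r u : ℝ) : ℝ := (Real.sqrt ((μ - u)^2 + 2*r*σ^2) + (μ - u)) / σ^2
noncomputable def th2 (μ σ r u : ℝ) : ℝ := (Real.sqrt ((μ - u)^2 + 2*r*σ^2) - (μ - u)) / σ^2

noncomputable def fbar (μ σ r d u₀ β z : ℝ) : ℝ :=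
  β * u₀ / r - (1/r) * (th2 μ σ r u₀ * Real.exp (th1 μ σ r u₀ * z) + th1 μ σ r u₀ * Real.exp (-(th2 μ σ r u₀) * z)) /
    ((th1 μ σ r u₀ + th2 μ σ r u₀) * Real.exp (th1 μ σ r u₀ * d))

theorem stmt10 (μ σ r d u₀ β : ℝ) (hσ : 0 < σ) (hr : 0 < r) (hd : 0 < d) (hu₀ : 0 < u₀)
    (hβ : 0 < β) :
    StrictConcaveOn ℝ (Set.Ioc 0 d) (fbar μ σ r d u₀ β) ∧
    StrictAntiOn (fbar μ σ r d u₀ β) (Set.Ioc 0 d) := by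
  set a := th1 μ σ r u₀ with ha_def
  set b := th2 μ σ r u₀ with hb_def
  have hσ2 : (0:ℝ) < σ^2 := by positivity
  have hsq : |μ - u₀| < Real.sqrt ((μ - u₀)^2 + 2*r*σ^2) := by
    rw [← Real.sqrt_sq_eq_abs]
    apply Real.sqrt_lt_sqrt (by positivity)
    nlinarith
  have ha : 0 < a := by
    rw [ha_def, th1]
    apply div_pos _ hσ2
    have := neg_abs_le (μ - u₀)
    linarith
  have hb : 0 < b := by
    rw [hb_def, th2]
    apply div_pos _ hσ2
    have := le_abs_self (μ - u₀)
    linarith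
  set D := (a + b) * Real.exp (a * d) with hD_def
  have hD : 0 < D := by positivity
  have hfb : fbar μ σ r d u₀ β =
      fun z => β * u₀ / r - (1/r) * (b * Real.exp (a*z) + a * Real.exp (-b*z)) / D := by
    funext z
    rw [fbar]
  have hderiv : ∀ z : ℝ, HasDerivAt (fbar μ σ r d u₀ β)
      (-((1/r) * (a * b * Real.exp (a*z) - a * b * Real.exp (-b*z)) / D)) z := by
    intro z
    have h1 : HasDerivAt (fun z => Real.exp (a*z)) (Real.exp (a*z) * a) z := by
      simpa using ((hasDerivAt_id z).const_mul a).exp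
    have h2 : HasDerivAt (fun z => Real.exp (-b*z)) (Real.exp (-b*z) * (-b)) z := by
      simpa using ((hasDerivAt_id z).const_mul (-b)).exp
    have h3 := (((h1.const_mul b).add (h2.const_mul a)).const_mul (1/r)).div_const D
    have h4 := h3.const_sub (β * u₀ / r)
    rw [hfb]
    refine h4.congr_deriv ?_
    ring
  have hderiv_eq : deriv (fbar μ σ r d u₀ β) =
      fun z => -((1/r) * (a * b * Real.exp (a*z) - a * b * Real.exp (-b*z)) / D) := by
    funext z
    exact (hderiv z).deriv
  have hderiv2 : ∀ z : ℝ, deriv^[2] (fbar μ σ r d u₀ β) z =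
      -((1/r) * (a * b * (Real.exp (a*z) * a) - a * b * (Real.exp (-b*z) * (-b))) / D) := by
    intro z
    have h1 : HasDerivAt (fun z => Real.exp (a*z)) (Real.exp (a*z) * a) z := by
      simpa using ((hasDerivAt_id z).const_mul a).exp
    have h2 : HasDerivAt (fun z => Real.exp (-b*z)) (Real.exp (-b*z) * (-b)) z := by
      simpa using ((hasDerivAt_id z).const_mul (-b)).exp
    have h3 := ((((h1.const_mul (a*b)).sub (h2.const_mul (a*b))).const_mul (1/r)).div_const D).neg
    have : deriv^[2] (fbar μ σ r d u₀ β) z = deriv (deriv (fbar μ σ r d u₀ β)) z := rfl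
    rw [this, hderiv_eq]
    exact h3.deriv
  have hcont : ContinuousOn (fbar μ σ r d u₀ β) (Set.Ioc 0 d) :=
    fun x _ => (hderiv x).differentiableAt.continuousAt.continuousWithinAt
  have hint : interior (Set.Ioc (0:ℝ) d) = Set.Ioo 0 d := interior_Ioc
  constructor
  · apply strictConcaveOn_of_deriv2_neg (convex_Ioc 0 d) hcont
    intro x hx
    rw [hderiv2 x]
    have e1 := Real.exp_pos (a*x)
    have e2 := Real.exp_pos (-b*x)
    have hr' : (0:ℝ) < 1/r := by positivity
    rw [neg_lt_zero]
    apply div_pos _ hD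
    apply mul_pos hr'
    nlinarith [mul_pos (mul_pos (mul_pos ha ha) hb) e1, mul_pos (mul_pos (mul_pos ha hb) hb) e2]
  · apply strictAntiOn_of_deriv_neg (convex_Ioc 0 d) hcont
    intro x hx
    rw [hint] at hx
    rw [hderiv_eq]
    have hx0 : 0 < x := hx.1
    have he : Real.exp (-b*x) < Real.exp (a*x) := by
      apply Real.exp_lt_exp.2
      nlinarith
    have hr' : (0:ℝ) < 1/r := by positivity
    simp only [neg_lt_zero]
    apply div_pos _ hD
    apply mul_pos hr'
    nlinarith [mul_pos (mul_pos ha hb) (sub_pos.2 he)]
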